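/- Let N ≥ 1, let a ∈ ℂ \ {0}, and let ζ_+, ζ_- ∈ ℂ \ {0} with ζ_+ ≠ ζ_- and |ζ_+| ≤ |ζ_-| ≤ 1. Then |(ζ_+^{N+1} − ζ_-^{N+1})/(a(ζ_+ − ζ_-))| ≤ (|ζ_-|^N / |a|) · min(N + 1, 2/|1 − ζ_+/ζ_-|). -/

import Mathlib

noncomputable section

/-- Bound on the effective Hamiltonian `E_{-+} = (ζ₊^{N+1} − ζ₋^{N+1})/(a(ζ₊ − ζ₋))`:
`|E_{-+}| ≤ (|ζ₋|^N/|a|) min(N+1, 2/|1 − ζ₊/ζ₋|)`. -/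
theorem Empm_bound (N : ℕ) (hN : 1 ≤ N) (a : ℂ) (ha : a ≠ 0)
    (ζp ζm : ℂ) (hp : ζp ≠ 0) (hm : ζm ≠ 0) (hne : ζp ≠ ζm)
    (h1 : ‖ζp‖ ≤ ‖ζm‖) (h2 : ‖ζm‖ ≤ 1) :
    ‖(ζp ^ (N + 1) - ζm ^ (N + 1)) / (a * (ζp - ζm))‖
      ≤ ‖ζm‖ ^ N / ‖a‖ *
          min ((N : ℝ) + 1) (2 / ‖1 - ζp / ζm‖) := by
  have hA : 0 < ‖a‖ := norm_pos_iff.mpr ha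
  have hM : 0 < ‖ζm‖ := norm_pos_iff.mpr hm
  have hD : 0 < ‖ζp - ζm‖ := norm_pos_iff.mpr (sub_ne_zero.mpr hne)
  rw [norm_div, norm_mul]
  rw [mul_min_of_nonneg _ _ (by positivity : (0:ℝ) ≤ ‖ζm‖ ^ N / ‖a‖)]
  refine le_min ?_ ?_
  · -- bound 1 via geometric sum
    have key := geom_sum₂_mul ζp ζm (N+1)
    have hsum : ‖∑ i ∈ Finset.range (N+1), ζp ^ i * ζm ^ (N - i)‖
        ≤ ((N:ℝ)+1) * ‖ζm‖ ^ N := by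
      calc ‖∑ i ∈ Finset.range (N+1), ζp ^ i * ζm ^ (N - i)‖
          ≤ ∑ i ∈ Finset.range (N+1), ‖ζp ^ i * ζm ^ (N - i)‖ :=
            norm_sum_le _ _
        _ ≤ ∑ i ∈ Finset.range (N+1), ‖ζm‖ ^ N := by
            refine Finset.sum_le_sum fun i hi => ?_
            have hi' : i ≤ N := Nat.lt_succ_iff.mp (Finset.mem_range.mp hi)
            rw [norm_mul, norm_pow, norm_pow]
            calc ‖ζp‖ ^ i * ‖ζm‖ ^ (N - i)
                ≤ ‖ζm‖ ^ i * ‖ζm‖ ^ (N - i) := by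
                  gcongr
              _ = ‖ζm‖ ^ N := by rw [← pow_add, Nat.add_sub_cancel' hi']
        _ = ((N:ℝ)+1) * ‖ζm‖ ^ N := by
            rw [Finset.sum_const, Finset.card_range, nsmul_eq_mul]
            push_cast; ring
    have hnum : ‖ζp ^ (N+1) - ζm ^ (N+1)‖
        ≤ ((N:ℝ)+1) * ‖ζm‖ ^ N * ‖ζp - ζm‖ := by
      rw [← key, norm_mul]
      exact mul_le_mul_of_nonneg_right hsum (norm_nonneg _)
    rw [div_le_iff₀ (by positivity)]
    refine hnum.trans (le_of_eq ?_)
    field_simp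
  · -- bound 2 via triangle inequality
    have hE : ‖1 - ζp / ζm‖ = ‖ζp - ζm‖ / ‖ζm‖ := by
      rw [show (1 : ℂ) - ζp / ζm = (ζm - ζp) / ζm by field_simp, norm_div,
        norm_sub_rev]
    have hnum2 : ‖ζp ^ (N+1) - ζm ^ (N+1)‖
        ≤ 2 * ‖ζm‖ ^ (N+1) := by
      calc ‖ζp ^ (N+1) - ζm ^ (N+1)‖
          ≤ ‖ζp ^ (N+1)‖ + ‖ζm ^ (N+1)‖ :=
            norm_sub_le _ _
        _ ≤ ‖ζm‖ ^ (N+1) + ‖ζm‖ ^ (N+1) := by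
            rw [norm_pow, norm_pow]
            gcongr
        _ = 2 * ‖ζm‖ ^ (N+1) := by ring
    rw [div_le_iff₀ (by positivity), hE]
    refine hnum2.trans (le_of_eq ?_)
    field_simp
    ring
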